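/- Let r(n) denote the parity of the number of runs of 1's in the binary representation of n. Then for all n ≥ 0: r(4n) = r(n), r(4n+1) = 1 - r(n), r(4n+2) = r(2n+1), and r(4n+3) = r(2n+1). -/

import Mathlib

/-- Digits of the negabinary (base -2) representation, least significant first. -/
def negaDigits (n : ℤ) : List ℕ :=
  if n = 0 then [] else (n % 2).toNat :: negaDigits ((n % 2 - n) / 2)
termination_by 2 * n.natAbs + (if n < 0 then 1 else 0)
decreasing_by split_ifs <;> omega

/-- Parity of the number of 1's in the negabinary representation of n. -/
def g (n : ℕ) : ℕ := (negaDigits n).sum % 2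

/-- The digit at position i in the negabinary representation. -/
def negaDigit (n : ℤ) (i : ℕ) : ℕ := (negaDigits n).getD i 0

/-- Number of runs (maximal blocks) of 1's in the binary representation of n. -/
def runsOfOnes (n : ℕ) : ℕ :=
  ((Finset.range (n + 1)).filter (fun i => n.testBit i ∧ ¬ n.testBit (i + 1))).card

/-- Parity of the number of runs of 1's in the binary representation of n. -/
def r (n : ℕ) : ℕ := runsOfOnes n % 2


lemma mem_le {n i : ℕ} (h : n.testBit i = true) : i ≤ n := by
  have h1 := Nat.ge_two_pow_of_testBit h
  have h2 := Nat.lt_two_pow_self (n := i)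
  omega

lemma runs_eq (n N : ℕ) (h : n < N) :
    runsOfOnes n = ((Finset.range N).filter (fun i => n.testBit i ∧ ¬ n.testBit (i+1))).card := by
  unfold runsOfOnes
  congr 1
  apply Finset.ext
  intro i
  simp only [Finset.mem_filter, Finset.mem_range]
  constructor
  · rintro ⟨hi, hb, hb'⟩; exact ⟨lt_of_le_of_lt (mem_le hb) h, hb, hb'⟩
  · rintro ⟨hi, hb, hb'⟩; exact ⟨Nat.lt_succ_of_le (mem_le hb), hb, hb'⟩

lemma runs_aux (m n : ℕ) (h0 : ∀ i, m.testBit (i+1) = n.testBit i) :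
    runsOfOnes m = runsOfOnes n + (if m.testBit 0 ∧ ¬ m.testBit 1 then 1 else 0) := by
  set M := m + n + 2 with hM
  rw [runs_eq m M (by omega), runs_eq n M (by omega)]
  have key : (Finset.range M).filter (fun i => m.testBit i ∧ ¬ m.testBit (i+1))
      = ((Finset.range M).filter (fun i => n.testBit i ∧ ¬ n.testBit (i+1))).image (· + 1)
        ∪ (if m.testBit 0 ∧ ¬ m.testBit 1 then {0} else ∅) := by
    apply Finset.ext
    intro i
    simp only [Finset.mem_union, Finset.mem_image, Finset.mem_filter, Finset.mem_range]
    constructor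
    · rintro ⟨hi, hb, hb'⟩
      cases i with
      | zero => right; simp [hb, hb']
      | succ j =>
        left
        rw [h0 j] at hb
        rw [h0 (j+1)] at hb'
        exact ⟨j, ⟨by omega, hb, hb'⟩, rfl⟩
    · rintro (⟨j, ⟨hj, hb, hb'⟩, rfl⟩ | h)
      · have := mem_le hb
        refine ⟨by omega, ?_, ?_⟩
        · rw [h0 j]; exact hb
        · rw [h0 (j+1)]; exact hb'
      · split_ifs at h with hc
        · simp at h; subst h
          exact ⟨by omega, hc.1, hc.2⟩
        · simp at h
  rw [key, Finset.card_union_of_disjoint, Finset.card_image_of_injective _ (fun a b h => by omega)]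
  · congr 1; split_ifs <;> simp
  · split_ifs
    · simp only [Finset.disjoint_singleton_right, Finset.mem_image]
      rintro ⟨j, _, hj⟩; omega
    · simp

lemma tb0_even (n : ℕ) : (2*n).testBit 0 = false := by simp [Nat.testBit_zero]
lemma tb0_odd (n : ℕ) : (2*n+1).testBit 0 = true := by simp [Nat.testBit_zero]
lemma tbs_even (n i : ℕ) : (2*n).testBit (i+1) = n.testBit i := by
  rw [Nat.testBit_succ]; congr 1; omega
lemma tbs_odd (n i : ℕ) : (2*n+1).testBit (i+1) = n.testBit i := by
  rw [Nat.testBit_succ]; congr 1; omega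

lemma runs_even (n : ℕ) : runsOfOnes (2*n) = runsOfOnes n := by
  rw [runs_aux (2*n) n (tbs_even n)]
  simp [tb0_even]

lemma runs_odd (n : ℕ) : runsOfOnes (2*n+1) = runsOfOnes n + (if ¬ n.testBit 0 then 1 else 0) := by
  rw [runs_aux (2*n+1) n (tbs_odd n)]
  have : (2*n+1).testBit 1 = n.testBit 0 := tbs_odd n 0
  simp only [tb0_odd, this, Nat.testBit_zero, true_and]

theorem stmt1 (n : ℕ) :
    r (4 * n) = r n ∧ r (4 * n + 1) = 1 - r n ∧
    r (4 * n + 2) = r (2 * n + 1) ∧ r (4 * n + 3) = r (2 * n + 1) := by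
  have h4 : 4 * n = 2 * (2 * n) := by ring
  have h41 : 4 * n + 1 = 2 * (2 * n) + 1 := by ring
  have h42 : 4 * n + 2 = 2 * (2 * n + 1) := by ring
  have h43 : 4 * n + 3 = 2 * (2 * n + 1) + 1 := by ring
  refine ⟨?_, ?_, ?_, ?_⟩
  · rw [r, r, h4, runs_even, runs_even]
  · rw [r, r, h41, runs_odd, runs_even, tb0_even]
    simp only [Bool.false_eq_true, not_false_eq_true, if_true]
    omega
  · rw [r, r, h42, runs_even]
  · rw [r, r, h43, runs_odd, tb0_odd]
    simp
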